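/- Let f be a multiplicative function with |f(n)| ≤ 1 for all n, and let f₁ be the completely multiplicative function defined by f₁(p) = f(p) at all primes p. Define α = f * (μ·f₁) (Dirichlet convolution), so that f = f₁ * α. Then α is multiplicative, α(p) = 0 for every prime p, |α(p^j)| ≤ 2 for all j ≥ 2, and consequently ∑_{n=1}^{∞} |α(n)| n^{−3/4} converges. -/

import Mathlib

open ArithmeticFunction Finset LSeries
open scoped LSeries.notation
open scoped ArithmeticFunction.zeta

lemma my_aux_decomp (n : ℕ) (hn : n ≠ 0)
    (hpow : ∀ p ∈ n.primeFactors, 2 ≤ n.factorization p) :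
    ∃ ab : ℕ × ℕ, 0 < ab.1 ∧ 0 < ab.2 ∧ ab.1 ^ 2 * ab.2 ^ 3 = n := by
  induction n using Nat.strong_induction_on with
  | _ n ih =>
    rcases eq_or_ne n 1 with rfl | h1
    · exact ⟨(1, 1), one_pos, one_pos, by norm_num⟩
    · have hp : n.minFac.Prime := Nat.minFac_prime h1
      set p := n.minFac with hpdef
      have hpmem : p ∈ n.primeFactors := Nat.mem_primeFactors.mpr ⟨hp, n.minFac_dvd, hn⟩
      set e := n.factorization p with hedef
      have he2 : 2 ≤ e := hpow p hpmem
      set m := ordCompl[p] n with hmdef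
      have hm0 : m ≠ 0 := (Nat.ordCompl_pos p hn).ne'
      have hpe1 : 1 < p ^ e := Nat.one_lt_pow (by omega) hp.one_lt
      have hmn : p ^ e * m = n := Nat.ordProj_mul_ordCompl_eq_self n p
      have hmlt : m < n := by
        calc m < p ^ e * m := by nlinarith [Nat.pos_of_ne_zero hm0]
        _ = n := hmn
      have hfacts : m.factorization = n.factorization.erase p :=
        Nat.factorization_ordCompl n p
      have hmpow : ∀ q ∈ m.primeFactors, 2 ≤ m.factorization q := by
        intro q hq
        have hq' : q ∈ (n.factorization.erase p).support := by
          rw [← hfacts, Nat.support_factorization]; exact hq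
        rw [Finsupp.support_erase, Finset.mem_erase] at hq'
        obtain ⟨hqp, hqn⟩ := hq'
        have hqn' : q ∈ n.primeFactors := by
          rw [← Nat.support_factorization]; exact hqn
        have : m.factorization q = n.factorization q := by
          rw [hfacts, Finsupp.erase_ne hqp]
        rw [this]
        exact hpow q hqn'
      obtain ⟨⟨a, b⟩, ha, hb, hab⟩ := ih m hmlt hm0 hmpow
      obtain ⟨q, r, hqr⟩ : ∃ q r, e = 2 * q + 3 * r := by
        rcases Nat.even_or_odd e with he | he
        · obtain ⟨k, hk⟩ := he; exact ⟨k, 0, by omega⟩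
        · obtain ⟨k, hk⟩ := he; exact ⟨k - 1, 1, by omega⟩
      refine ⟨(p ^ q * a, p ^ r * b), Nat.mul_pos (pow_pos hp.pos q) ha,
        Nat.mul_pos (pow_pos hp.pos r) hb, ?_⟩
      have key : (p ^ q * a) ^ 2 * (p ^ r * b) ^ 3
          = p ^ (2 * q + 3 * r) * (a ^ 2 * b ^ 3) := by
        rw [pow_add]; ring
      rw [key, hab, ← hqr, hmn]


lemma my_aux_sumG :
    Summable (fun n : ℕ => (n.divisors.card : ℝ) * (n : ℝ) ^ (-(3 / 2 : ℝ))) := by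
  have hs : (1 : ℝ) < (((3 / 2 : ℝ) : ℂ)).re := by
    rw [Complex.ofReal_re]; norm_num
  have hz : LSeriesSummable (↗((ζ : ArithmeticFunction ℕ) : ArithmeticFunction ℂ))
      ((3 / 2 : ℝ) : ℂ) := by
    refine (LSeriesSummable_congr _ ?_).mpr (LSeriesSummable_zeta_iff.mpr hs)
    intro n hn
    simp [natCoe_apply]
  have hzz := ArithmeticFunction.LSeriesSummable_mul hz hz
  have hnorm : Summable fun n : ℕ =>
      ‖term (↗(((ζ : ArithmeticFunction ℕ) : ArithmeticFunction ℂ) *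
        ((ζ : ArithmeticFunction ℕ) : ArithmeticFunction ℂ))) ((3 / 2 : ℝ) : ℂ) n‖ :=
    hzz.norm
  refine hnorm.congr fun n => ?_
  rw [norm_term_eq]
  rcases eq_or_ne n 0 with rfl | hn
  · simp
  · rw [if_neg hn]
    have h1 : (((ζ : ArithmeticFunction ℕ) : ArithmeticFunction ℂ) *
        ((ζ : ArithmeticFunction ℕ) : ArithmeticFunction ℂ)) n = (n.divisors.card : ℂ) := by
      rw [coe_zeta_mul_apply]
      rw [Finset.sum_congr rfl (fun d hd => ?_)]
      · rw [Finset.sum_const, nsmul_eq_mul, mul_one]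
      · rw [natCoe_apply, zeta_apply_ne (Nat.pos_of_mem_divisors hd).ne', Nat.cast_one]
    rw [h1, Complex.ofReal_re, Complex.norm_natCast]
    rw [Real.rpow_neg (Nat.cast_nonneg n), div_eq_mul_inv]


/-- For a 1-bounded multiplicative `f` and the completely multiplicative `f₁` agreeing
with `f` at primes, the function `α = f * (μ·f₁)` (Dirichlet convolution) is
multiplicative, vanishes at primes, satisfies `|α(p^j)| ≤ 2` for `j ≥ 2`, the series
`∑ |α(n)| n^{-3/4}` converges, and `f = f₁ * α`. -/
theorem stmt_7 (f f₁ α : ArithmeticFunction ℂ)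
    (hf : f.IsMultiplicative) (hf_bd : ∀ n, ‖f n‖ ≤ 1)
    (hf₁_one : f₁ 1 = 1) (hf₁_mul : ∀ m n : ℕ, f₁ (m * n) = f₁ m * f₁ n)
    (hf₁_eq : ∀ p : ℕ, p.Prime → f₁ p = f p)
    (hα : ∀ n : ℕ, α n =
      ∑ d ∈ n.divisors, f d * (((moebius (n / d) : ℤ) : ℂ) * f₁ (n / d))) :
    α.IsMultiplicative ∧
    (∀ p : ℕ, p.Prime → α p = 0) ∧
    (∀ p j : ℕ, p.Prime → 2 ≤ j → ‖α (p ^ j)‖ ≤ 2) ∧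
    (Summable fun n : ℕ => ‖α n‖ * (n : ℝ) ^ (-(3 / 4 : ℝ))) ∧
    (∀ n : ℕ, f n = ∑ d ∈ n.divisors, f₁ d * α (n / d)) := by
  have hf₁m : f₁.IsMultiplicative := ⟨hf₁_one, fun {m n} _ => hf₁_mul m n⟩
  set g : ArithmeticFunction ℂ :=
    pmul ((moebius : ArithmeticFunction ℤ) : ArithmeticFunction ℂ) f₁ with hg
  have hgap : ∀ k : ℕ, g k = ((moebius k : ℤ) : ℂ) * f₁ k := by
    intro k; rw [hg, pmul_apply, intCoe_apply]
  have hαfg : α = f * g := by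
    ext n
    rw [hα n, mul_apply, Nat.sum_divisorsAntidiagonal (f := fun d e => f d * g e)]
    exact Finset.sum_congr rfl fun d _ => by rw [hgap]
  have hmult : α.IsMultiplicative := by
    rw [hαfg]
    exact hf.mul (isMultiplicative_moebius.intCast.pmul hf₁m)
  -- primes vanish
  have hαp : ∀ p : ℕ, p.Prime → α p = 0 := by
    intro p hp
    rw [hα p, hp.divisors, Finset.sum_insert (by simp [Ne.symm hp.ne_one]),
      Finset.sum_singleton, Nat.div_one, Nat.div_self hp.pos,
      moebius_apply_prime hp, moebius_apply_one, hf.map_one, hf₁_one, hf₁_eq p hp]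
    push_cast
    ring
  -- prime power formula
  have hαpp : ∀ p j : ℕ, p.Prime → 1 ≤ j →
      α (p ^ j) = f (p ^ j) - f (p ^ (j - 1)) * f₁ p := by
    intro p j hp hj
    have hp0 : 0 < p := hp.pos
    rw [hα, Nat.sum_divisors_prime_pow hp]
    have hsplit : j + 1 = (j - 1) + 1 + 1 := by omega
    rw [hsplit, Finset.sum_range_succ, Finset.sum_range_succ]
    have h1 : ∀ i ∈ Finset.range (j - 1),
        f (p ^ i) * (((moebius (p ^ j / p ^ i) : ℤ) : ℂ) * f₁ (p ^ j / p ^ i)) = 0 := by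
      intro i hi
      rw [Finset.mem_range] at hi
      rw [Nat.pow_div (by omega) hp0, moebius_apply_prime_pow hp (by omega),
        if_neg (by omega)]
      simp
    rw [Finset.sum_eq_zero h1, zero_add]
    have e1 : j - 1 + 1 = j := by omega
    have e2 : p ^ j / p ^ (j - 1) = p := by
      rw [Nat.pow_div (by omega) hp0, show j - (j - 1) = 1 by omega, pow_one]
    have e3 : p ^ j / p ^ j = 1 := Nat.div_self (pow_pos hp0 j)
    rw [e1, e2, e3, moebius_apply_prime hp, moebius_apply_one, hf₁_one]
    push_cast
    ring
  -- prime power bound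
  have hbd : ∀ p j : ℕ, p.Prime → 1 ≤ j → ‖α (p ^ j)‖ ≤ 2 := by
    intro p j hp hj
    rw [hαpp p j hp hj]
    calc ‖f (p ^ j) - f (p ^ (j - 1)) * f₁ p‖
        ≤ ‖f (p ^ j)‖ + ‖f (p ^ (j - 1))‖ * ‖f₁ p‖ := by
          rw [← norm_mul]; exact norm_sub_le _ _
      _ ≤ 1 + 1 * 1 := by
          gcongr
          · exact hf_bd _
          · exact hf_bd _
          · rw [hf₁_eq p hp]; exact hf_bd p
      _ = 2 := by norm_num
  -- f = f₁ * α
  have hinv : f₁ * g = 1 := by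
    ext n
    rcases eq_or_ne n 0 with rfl | hn
    · simp
    rw [mul_apply, one_apply]
    have hterm : ∀ x ∈ n.divisorsAntidiagonal,
        f₁ x.1 * g x.2 = ((moebius x.2 : ℤ) : ℂ) * f₁ n := by
      intro x hx
      obtain ⟨hxx, -⟩ := Nat.mem_divisorsAntidiagonal.mp hx
      rw [hgap, ← hxx, hf₁_mul]
      ring
    rw [Finset.sum_congr rfl hterm,
      ← Finset.sum_mul (f := fun x : ℕ × ℕ => ((moebius x.2 : ℤ) : ℂ))]
    have hμ : (∑ x ∈ n.divisorsAntidiagonal, ((moebius x.2 : ℤ) : ℂ))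
        = if n = 1 then 1 else 0 := by
      rw [Nat.sum_divisorsAntidiagonal' (f := fun _ e => ((moebius e : ℤ) : ℂ))]
      have hz : (∑ i ∈ n.divisors, moebius i) = if n = 1 then 1 else 0 := by
        have h0 := congrArg (fun F : ArithmeticFunction ℤ => F n) moebius_mul_coe_zeta
        simp only [coe_mul_zeta_apply, one_apply] at h0
        exact h0
      have hcast : (∑ i ∈ n.divisors, ((moebius i : ℤ) : ℂ))
          = ((∑ i ∈ n.divisors, moebius i : ℤ) : ℂ) := by push_cast; rfl
      rw [hcast, hz]
      split_ifs <;> simp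
    rw [hμ]
    split_ifs with h
    · subst h; rw [hf₁_one, one_mul]
    · rw [zero_mul]
  have hfeq : f₁ * α = f := by
    rw [hαfg, mul_left_comm, hinv, mul_one]
  have hfinal : ∀ n : ℕ, f n = ∑ d ∈ n.divisors, f₁ d * α (n / d) := by
    intro n
    conv_lhs => rw [← hfeq]
    rw [mul_apply, Nat.sum_divisorsAntidiagonal (f := fun d e => f₁ d * α e)]
  refine ⟨hmult, hαp, fun p j hp hj => hbd p j hp (by omega), ?_, hfinal⟩
  classical
  -- norm factorization
  have hfact : ∀ n : ℕ, n ≠ 0 →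
      ‖α n‖ = ∏ p ∈ n.primeFactors, ‖α (p ^ n.factorization p)‖ := by
    intro n hn
    rw [hmult.multiplicative_factorization α hn,
      Nat.prod_factorization_eq_prod_primeFactors (fun p k => α (p ^ k)), norm_prod]
  have hzero : ∀ n : ℕ, n ≠ 0 → (∃ p ∈ n.primeFactors, n.factorization p < 2) →
      ‖α n‖ = 0 := by
    intro n hn ⟨p, hp, hlt⟩
    rw [hfact n hn]
    apply Finset.prod_eq_zero hp
    have h1 : n.factorization p = 1 := by
      have := Nat.Prime.factorization_pos_of_dvd (Nat.prime_of_mem_primeFactors hp)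
        hn (Nat.dvd_of_mem_primeFactors hp)
      omega
    rw [h1, pow_one, hαp p (Nat.prime_of_mem_primeFactors hp), norm_zero]
  have hle : ∀ n : ℕ, n ≠ 0 → ‖α n‖ ≤ (2 : ℝ) ^ n.primeFactors.card := by
    intro n hn
    rw [hfact n hn]
    calc ∏ p ∈ n.primeFactors, ‖α (p ^ n.factorization p)‖
        ≤ ∏ p ∈ n.primeFactors, (2 : ℝ) := by
          apply Finset.prod_le_prod (fun _ _ => norm_nonneg _)
          intro p hp
          exact hbd p _ (Nat.prime_of_mem_primeFactors hp)
            (Nat.Prime.factorization_pos_of_dvd (Nat.prime_of_mem_primeFactors hp)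
              hn (Nat.dvd_of_mem_primeFactors hp))
      _ = (2 : ℝ) ^ n.primeFactors.card := Finset.prod_const 2
  set P : ℕ → Prop := fun n => ∃ ab : ℕ × ℕ, 0 < ab.1 ∧ 0 < ab.2 ∧ ab.1 ^ 2 * ab.2 ^ 3 = n
    with hP
  set r : ℕ → ℕ × ℕ := fun n => if h : P n then h.choose else (0, n) with hr
  have hr1 : ∀ n, P n → 0 < (r n).1 ∧ 0 < (r n).2 ∧ (r n).1 ^ 2 * (r n).2 ^ 3 = n := by
    intro n h
    simp only [hr, dif_pos h]
    exact h.choose_spec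
  have hr2 : ∀ n, ¬ P n → r n = (0, n) := by intro n h; simp only [hr, dif_neg h]
  have hrinj : Function.Injective r := by
    intro m n hmn
    by_cases hm : P m <;> by_cases hn : P n
    · obtain ⟨-, -, h3⟩ := hr1 m hm
      obtain ⟨-, -, h3'⟩ := hr1 n hn
      rw [← h3, ← h3', hmn]
    · exfalso
      have := (hr1 m hm).1
      rw [hmn, hr2 n hn] at this
      exact lt_irrefl 0 this
    · exfalso
      have := (hr1 n hn).1
      rw [← hmn, hr2 m hm] at this
      exact lt_irrefl 0 this
    · rw [hr2 m hm, hr2 n hn] at hmn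
      exact (Prod.ext_iff.mp hmn).2
  have hHsum : Summable (fun ab : ℕ × ℕ =>
      ((ab.1.divisors.card : ℝ) * (ab.1 : ℝ) ^ (-(3 / 2 : ℝ))) *
        ((ab.2 : ℝ) ^ (-(5 / 4 : ℝ)))) := by
    exact Summable.mul_of_nonneg
      (f := fun a : ℕ => (a.divisors.card : ℝ) * (a : ℝ) ^ (-(3 / 2 : ℝ)))
      (g := fun b : ℕ => (b : ℝ) ^ (-(5 / 4 : ℝ)))
      my_aux_sumG (Real.summable_nat_rpow.mpr (by norm_num))
      (fun x => mul_nonneg (Nat.cast_nonneg _) (Real.rpow_nonneg (Nat.cast_nonneg _) _)) (fun x => by positivity)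
  have key : Summable (fun n : ℕ =>
      (((r n).1.divisors.card : ℝ) * ((r n).1 : ℝ) ^ (-(3 / 2 : ℝ))) *
        (((r n).2 : ℝ) ^ (-(5 / 4 : ℝ)))) := hHsum.comp_injective hrinj
  refine Summable.of_nonneg_of_le (fun n => by positivity) (fun n => ?_) key
  have hHnn : (0:ℝ) ≤ (((r n).1.divisors.card : ℝ) * ((r n).1 : ℝ) ^ (-(3 / 2 : ℝ))) *
      (((r n).2 : ℝ) ^ (-(5 / 4 : ℝ))) :=
    mul_nonneg (mul_nonneg (Nat.cast_nonneg _) (Real.rpow_nonneg (Nat.cast_nonneg _) _))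
      (Real.rpow_nonneg (Nat.cast_nonneg _) _)
  rcases eq_or_ne n 0 with rfl | hn
  · simpa using hHnn
  by_cases hpowful : ∀ p ∈ n.primeFactors, 2 ≤ n.factorization p
  · have hPn : P n := my_aux_decomp n hn hpowful
    obtain ⟨ha, hb, hab⟩ := hr1 n hPn
    set a := (r n).1 with hadef
    set b := (r n).2 with hbdef
    have hcard : n.primeFactors.card ≤ a.primeFactors.card + b.primeFactors.card := by
      rw [← hab, Nat.primeFactors_mul (pow_ne_zero _ ha.ne') (pow_ne_zero _ hb.ne'),
        Nat.primeFactors_pow a two_ne_zero, Nat.primeFactors_pow b three_ne_zero]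
      exact Finset.card_union_le _ _
    have h2a : (2 : ℕ) ^ a.primeFactors.card ≤ a.divisors.card := by
      rw [Nat.card_divisors ha.ne']
      calc (2 : ℕ) ^ a.primeFactors.card = ∏ p ∈ a.primeFactors, 2 :=
            (Finset.prod_const 2).symm
        _ ≤ ∏ p ∈ a.primeFactors, (a.factorization p + 1) := by
            apply Finset.prod_le_prod'
            intro p hp
            have := Nat.Prime.factorization_pos_of_dvd (Nat.prime_of_mem_primeFactors hp)
              ha.ne' (Nat.dvd_of_mem_primeFactors hp)
            omega
    have h2b : (2 : ℕ) ^ b.primeFactors.card ≤ b := by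
      calc (2 : ℕ) ^ b.primeFactors.card = ∏ p ∈ b.primeFactors, 2 :=
            (Finset.prod_const 2).symm
        _ ≤ ∏ p ∈ b.primeFactors, p :=
            Finset.prod_le_prod' fun p hp => (Nat.prime_of_mem_primeFactors hp).two_le
        _ ≤ b := Nat.le_of_dvd hb (Nat.prod_primeFactors_dvd b)
    have hαle : ‖α n‖ ≤ (a.divisors.card : ℝ) * (b : ℝ) := by
      calc ‖α n‖ ≤ (2 : ℝ) ^ n.primeFactors.card := hle n hn
        _ ≤ (2 : ℝ) ^ (a.primeFactors.card + b.primeFactors.card) := by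
            apply pow_le_pow_right₀ (by norm_num) hcard
        _ = (2 : ℝ) ^ a.primeFactors.card * (2 : ℝ) ^ b.primeFactors.card := pow_add 2 _ _
        _ ≤ (a.divisors.card : ℝ) * (b : ℝ) := by
            have h2a' : ((2 : ℝ) ^ a.primeFactors.card : ℝ) ≤ (a.divisors.card : ℝ) := by
              exact_mod_cast h2a
            have h2b' : ((2 : ℝ) ^ b.primeFactors.card : ℝ) ≤ (b : ℝ) := by
              exact_mod_cast h2b
            exact mul_le_mul h2a' h2b' (by positivity) (Nat.cast_nonneg _)
    have hsplitpow : (n : ℝ) ^ (-(3 / 4 : ℝ))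
        = (a : ℝ) ^ (-(3 / 2 : ℝ)) * (b : ℝ) ^ (-(9 / 4 : ℝ)) := by
      rw [← hab]
      push_cast
      rw [Real.mul_rpow (by positivity) (by positivity),
        ← Real.rpow_natCast (a : ℝ) 2, ← Real.rpow_natCast (b : ℝ) 3,
        ← Real.rpow_mul (Nat.cast_nonneg a), ← Real.rpow_mul (Nat.cast_nonneg b)]
      norm_num
    have hbmerge : (b : ℝ) * (b : ℝ) ^ (-(9 / 4 : ℝ)) = (b : ℝ) ^ (-(5 / 4 : ℝ)) := by
      have hb' : (0 : ℝ) < (b : ℝ) := by exact_mod_cast hb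
      nth_rewrite 1 [← Real.rpow_one (b : ℝ)]
      rw [← Real.rpow_add hb']
      norm_num
    calc ‖α n‖ * (n : ℝ) ^ (-(3 / 4 : ℝ))
        ≤ ((a.divisors.card : ℝ) * (b : ℝ)) *
            ((a : ℝ) ^ (-(3 / 2 : ℝ)) * (b : ℝ) ^ (-(9 / 4 : ℝ))) := by
          rw [hsplitpow]
          exact mul_le_mul_of_nonneg_right hαle (by positivity)
      _ = ((a.divisors.card : ℝ) * (a : ℝ) ^ (-(3 / 2 : ℝ))) *
            ((b : ℝ) ^ (-(5 / 4 : ℝ))) := by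
          rw [← hbmerge]
          ring
  · push_neg at hpowful
    obtain ⟨p, hp, hlt⟩ := hpowful
    rw [hzero n hn ⟨p, hp, hlt⟩, zero_mul]
    exact hHnn
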